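/- arXiv:1801.06088 — 2 statements merged into one kernel-verified Lean document; each statement's English description precedes it below -/
import Mathlib

section
/- Let $L$ satisfy $L(x,u,v)\ge L_0(x,v)-K|u|$, $L_0(x,v)\ge\theta_0(|v|)-c_0$ with $\theta_0:[0,\infty)\to[0,\infty)$ nondecreasing with $\theta_0(0)=0$. Let $\xi:[0,t]\to\mathbb{R}^n$ and $u_\xi:[0,t]\to\mathbb{R}$ be absolutely continuous with $\dot u_\xi(s)=L(\xi(s),u_\xi(s),\dot\xi(s))$ a.e. and $u_\xi(0)=u\le 0$. Then $u_\xi(t)\ge e^{Kt}u + e^{-Kt}\int_0^t\theta_0(|\dot\xi(s)|)\,ds - c_0 t e^{Kt}$. -/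
open MeasureTheory

lemma expDeriv (c : ℝ) (τ : ℝ) : HasDerivAt (fun y => Real.exp (c*y)) (c * Real.exp (c*τ)) τ := by
  have h := ((hasDerivAt_id' τ).const_mul c).exp
  convert h using 1; ring

lemma expInt' (c x y : ℝ) : ∫ τ in x..y, c * Real.exp (c*τ)
    = Real.exp (c*y) - Real.exp (c*x) :=
  intervalIntegral.integral_eq_sub_of_hasDerivAt (fun τ _ => expDeriv c τ)
    (Continuous.intervalIntegrable (by continuity) _ _)

lemma expInt (c x y : ℝ) (hc : c ≠ 0) : ∫ τ in x..y, Real.exp (c*τ)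
    = (Real.exp (c*y) - Real.exp (c*x)) / c := by
  have h := expInt' c x y
  rw [intervalIntegral.integral_const_mul] at h
  rw [eq_div_iff hc, mul_comm, ← h]

lemma fub (c a b : ℝ) (hab : a ≤ b) (g : ℝ → ℝ) (hg : IntervalIntegrable g volume a b) :
    ∫ τ in a..b, c * Real.exp (c*τ) * (∫ σ in a..τ, g σ)
      = ∫ σ in a..b, (Real.exp (c*b) - Real.exp (c*σ)) * g σ := by
  have hgI : IntegrableOn g (Set.Ioc a b) := by
    rwa [intervalIntegrable_iff_integrableOn_Ioc_of_le hab] at hg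
  set μ := volume.restrict (Set.Ioc a b) with hμ
  have hS : MeasurableSet {p : ℝ×ℝ | p.2 ≤ p.1} :=
    (isClosed_le continuous_snd continuous_fst).measurableSet
  set F : ℝ × ℝ → ℝ :=
    Set.indicator {p : ℝ×ℝ | p.2 ≤ p.1} (fun p => c * Real.exp (c*p.1) * g p.2) with hF
  have h1 : Integrable (fun τ : ℝ => c * Real.exp (c*τ)) μ :=
    Continuous.integrableOn_Ioc (by continuity)
  have hint : Integrable (fun p : ℝ×ℝ => (c * Real.exp (c*p.1)) * g p.2) (μ.prod μ) :=
    h1.mul_prod hgI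
  have hFint : Integrable F (μ.prod μ) := hint.indicator hS
  have swap := integral_integral_swap (f := fun τ σ => F (τ, σ)) (μ := μ) (ν := μ) hFint
  have hL : (∫ τ, (∫ σ, F (τ, σ) ∂μ) ∂μ)
      = ∫ τ in a..b, c * Real.exp (c*τ) * (∫ σ in a..τ, g σ) := by
    rw [intervalIntegral.integral_of_le hab, hμ]
    refine setIntegral_congr_fun measurableSet_Ioc (fun τ hτ => ?_)
    have h1 : (fun σ => F (τ, σ))
        = (Set.Iic τ).indicator (fun σ => c * Real.exp (c*τ) * g σ) := by
      funext σ
      simp only [hF, Set.indicator_apply, Set.mem_setOf_eq, Set.mem_Iic]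
    rw [h1, integral_indicator measurableSet_Iic,
      Measure.restrict_restrict measurableSet_Iic]
    have h2 : Set.Iic τ ∩ Set.Ioc a b = Set.Ioc a τ := by
      ext σ
      simp only [Set.mem_inter_iff, Set.mem_Iic, Set.mem_Ioc]
      exact ⟨fun h => ⟨h.2.1, h.1⟩, fun h => ⟨h.2, h.1, h.2.trans hτ.2⟩⟩
    rw [h2, intervalIntegral.integral_of_le hτ.1.le, integral_const_mul]
  have hR : (∫ σ, (∫ τ, F (τ, σ) ∂μ) ∂μ)
      = ∫ σ in a..b, (Real.exp (c*b) - Real.exp (c*σ)) * g σ := by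
    rw [intervalIntegral.integral_of_le hab, hμ]
    refine setIntegral_congr_fun measurableSet_Ioc (fun σ hσ => ?_)
    have h1 : (fun τ => F (τ, σ))
        = (Set.Ici σ).indicator (fun τ => c * Real.exp (c*τ) * g σ) := by
      funext τ
      simp only [hF, Set.indicator_apply, Set.mem_setOf_eq, Set.mem_Ici]
    rw [h1, integral_indicator measurableSet_Ici,
      Measure.restrict_restrict measurableSet_Ici]
    have h2 : Set.Ici σ ∩ Set.Ioc a b = Set.Icc σ b := by
      ext τ
      simp only [Set.mem_inter_iff, Set.mem_Ici, Set.mem_Ioc, Set.mem_Icc]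
      exact ⟨fun h => ⟨h.1, h.2.2⟩, fun h => ⟨h.1, hσ.1.trans_le h.1, h.2⟩⟩
    rw [h2, integral_Icc_eq_integral_Ioc, ← intervalIntegral.integral_of_le hσ.2,
      intervalIntegral.integral_mul_const, expInt' c σ b]
  rw [← hL, ← hR, swap]

lemma parts (c a b : ℝ) (hab : a ≤ b) (ℓ f : ℝ → ℝ)
    (hℓ : IntervalIntegrable ℓ volume a b)
    (hf : ∀ s ∈ Set.Icc a b, f s = f a + ∫ σ in a..s, ℓ σ) :
    Real.exp (c*b) * f b - Real.exp (c*a) * f a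
      = ∫ τ in a..b, Real.exp (c*τ) * (ℓ τ + c * f τ) := by
  have hfb := hf b ⟨hab, le_rfl⟩
  have hec : Continuous fun τ : ℝ => Real.exp (c*τ) :=
    Real.continuous_exp.comp (continuous_const.mul continuous_id)
  have hcont : ContinuousOn (fun τ => ∫ σ in a..τ, ℓ σ) (Set.uIcc a b) :=
    intervalIntegral.continuousOn_primitive_interval' hℓ Set.left_mem_uIcc
  have h1 : IntervalIntegrable (fun τ => Real.exp (c*τ) * ℓ τ) volume a b :=
    hℓ.continuousOn_mul hec.continuousOn
  have h2 : IntervalIntegrable (fun τ => Real.exp (c*τ) * (c * f a)) volume a b :=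
    Continuous.intervalIntegrable (hec.mul continuous_const) _ _
  have h3 : IntervalIntegrable (fun τ => c * Real.exp (c*τ) * (∫ σ in a..τ, ℓ σ)) volume a b :=
    ContinuousOn.intervalIntegrable (((continuous_const.mul hec).continuousOn).mul hcont)
  have key : (∫ τ in a..b, Real.exp (c*τ) * (ℓ τ + c * f τ))
      = ∫ τ in a..b, (Real.exp (c*τ) * ℓ τ + (Real.exp (c*τ) * (c * f a)
          + c * Real.exp (c*τ) * (∫ σ in a..τ, ℓ σ))) := by
    refine intervalIntegral.integral_congr (fun τ hτ => ?_)
    rw [Set.uIcc_of_le hab] at hτ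
    rw [hf τ hτ]; ring
  rw [key, intervalIntegral.integral_add h1 (h2.add h3), intervalIntegral.integral_add h2 h3,
    fub c a b hab ℓ hℓ, intervalIntegral.integral_mul_const]
  have e1 : (∫ τ in a..b, Real.exp (c*τ)) * (c * f a)
      = f a * (Real.exp (c*b) - Real.exp (c*a)) := by
    have h := expInt' c a b
    rw [intervalIntegral.integral_const_mul] at h
    linear_combination f a * h
  have e2 : (∫ σ in a..b, (Real.exp (c*b) - Real.exp (c*σ)) * ℓ σ)
      = Real.exp (c*b) * (∫ σ in a..b, ℓ σ) - ∫ σ in a..b, Real.exp (c*σ) * ℓ σ := by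
    rw [← intervalIntegral.integral_const_mul, ← intervalIntegral.integral_sub (hℓ.const_mul _) h1]
    congr 1; funext σ; ring
  rw [e2]
  linear_combination Real.exp (c*b) * hfb - e1

lemma step1 (K c₀ t u : ℝ) (hK : 0 < K) (hc : 0 ≤ c₀) (ht : 0 ≤ t) (hu : u ≤ 0)
    (ℓ f : ℝ → ℝ) (hℓ : IntervalIntegrable ℓ volume 0 t)
    (hf : ∀ s ∈ Set.Icc (0:ℝ) t, f s = f 0 + ∫ σ in (0:ℝ)..s, ℓ σ)
    (hf0 : f 0 = u)
    (hpt : ∀ τ ∈ Set.Icc (0:ℝ) t, -c₀ - K * |f τ| ≤ ℓ τ) :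
    ∀ s ∈ Set.Icc (0:ℝ) t, Real.exp (K*s) * (u - c₀*s) ≤ f s := by
  -- continuity of f on [0,t]
  have hfc : ContinuousOn f (Set.Icc 0 t) := by
    have hprim := intervalIntegral.continuousOn_primitive_interval' hℓ Set.left_mem_uIcc
    rw [Set.uIcc_of_le ht] at hprim
    exact (continuousOn_const.add hprim).congr (fun x hx => hf x hx)
  intro s hs
  by_contra hcon
  push_neg at hcon
  set q : ℝ → ℝ := fun r => Real.exp (K*r) * (u - c₀*r) with hq
  have hqc : Continuous q := by
    exact (Real.continuous_exp.comp (continuous_const.mul continuous_id)).mul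
      (continuous_const.sub (continuous_const.mul continuous_id))
  set S : Set ℝ := Set.Icc 0 s ∩ (fun r => f r - q r) ⁻¹' (Set.Ici 0) with hS
  have hsub : Set.Icc (0:ℝ) s ⊆ Set.Icc 0 t := Set.Icc_subset_Icc le_rfl hs.2
  have hScl : IsClosed S :=
    ContinuousOn.preimage_isClosed_of_isClosed
      (((hfc.mono hsub).sub hqc.continuousOn)) isClosed_Icc isClosed_Ici
  have h0S : (0:ℝ) ∈ S := by
    constructor
    · exact ⟨le_rfl, hs.1⟩
    · simp only [Set.mem_preimage, Set.mem_Ici, hq, hf0]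
      simp
  have hbdd : BddAbove S := ⟨s, fun x hx => hx.1.2⟩
  set s₀ := sSup S with hs₀def
  have hs₀S : s₀ ∈ S := hScl.csSup_mem ⟨0, h0S⟩ hbdd
  have hs₀mem : s₀ ∈ Set.Icc (0:ℝ) s := hs₀S.1
  have hq₀ : q s₀ ≤ f s₀ := by
    have := hs₀S.2
    simp only [Set.mem_preimage, Set.mem_Ici, sub_nonneg] at this
    exact this
  have hs₀lt : s₀ < s := by
    rcases lt_or_eq_of_le hs₀mem.2 with h | h
    · exact h
    · exact absurd (h ▸ hq₀) (not_le.mpr hcon)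
  have hneg : ∀ r ∈ Set.Ioc s₀ s, f r < q r := by
    intro r hr
    by_contra hge
    push_neg at hge
    have hrS : r ∈ S := ⟨⟨hs₀mem.1.trans hr.1.le, hr.2⟩, by
      simp only [Set.mem_preimage, Set.mem_Ici, sub_nonneg]; exact hge⟩
    exact absurd (le_csSup hbdd hrS) (not_le.mpr hr.1)
  have hqneg : ∀ r, 0 ≤ r → q r ≤ 0 := by
    intro r hr
    apply mul_nonpos_of_nonneg_of_nonpos (Real.exp_pos _).le
    nlinarith [mul_nonneg hc hr]
  -- integrability on [s₀, s]
  have hsubI : Set.uIcc s₀ s ⊆ Set.uIcc (0:ℝ) t := by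
    rw [Set.uIcc_of_le ht, Set.uIcc_of_le hs₀lt.le]
    exact Set.Icc_subset_Icc hs₀mem.1 hs.2
  have hℓ' : IntervalIntegrable ℓ volume s₀ s := hℓ.mono_set hsubI
  have hfint : ∀ r ∈ Set.Icc s₀ s, f r = f s₀ + ∫ σ in s₀..r, ℓ σ := by
    intro r hr
    have h1 := hf r ⟨hs₀mem.1.trans hr.1, hr.2.trans hs.2⟩
    have h2 := hf s₀ ⟨hs₀mem.1, hs₀mem.2.trans hs.2⟩
    have h3 : IntervalIntegrable ℓ volume 0 r := hℓ.mono_set (by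
      rw [Set.uIcc_of_le ht, Set.uIcc_of_le (hs₀mem.1.trans hr.1)]
      exact Set.Icc_subset_Icc le_rfl (hr.2.trans hs.2))
    have h4 : IntervalIntegrable ℓ volume 0 s₀ := hℓ.mono_set (by
      rw [Set.uIcc_of_le ht, Set.uIcc_of_le hs₀mem.1]
      exact Set.Icc_subset_Icc le_rfl (hs₀mem.2.trans hs.2))
    have := intervalIntegral.integral_interval_sub_left h3 h4
    rw [h1, h2]
    rw [← this]
    ring
  -- parts identity on [s₀, s] with c = -K
  have hparts := parts (-K) s₀ s hs₀lt.le ℓ f hℓ' hfint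
  -- bound the integrand from below on Ioc s₀ s
  have hfc' : ContinuousOn f (Set.Icc s₀ s) := hfc.mono (hsub.trans' (Set.Icc_subset_Icc hs₀mem.1 le_rfl))
  have hmono : (∫ τ in s₀..s, -c₀ * Real.exp (-K*τ))
      ≤ ∫ τ in s₀..s, Real.exp (-K*τ) * (ℓ τ + (-K) * f τ) := by
    rw [intervalIntegral.integral_of_le hs₀lt.le, intervalIntegral.integral_of_le hs₀lt.le]
    apply setIntegral_mono_on
    · exact (Continuous.intervalIntegrable (continuous_const.mul
        (Real.continuous_exp.comp (continuous_const.mul continuous_id))) s₀ s).1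
    · have : IntervalIntegrable (fun τ => Real.exp (-K*τ) * (ℓ τ + (-K) * f τ)) volume s₀ s := by
        apply IntervalIntegrable.continuousOn_mul
        · apply hℓ'.add
          apply ContinuousOn.intervalIntegrable
          rw [Set.uIcc_of_le hs₀lt.le]
          exact continuousOn_const.mul hfc'
        · exact (Real.continuous_exp.comp (continuous_const.mul continuous_id)).continuousOn
      exact this.1
    · exact measurableSet_Ioc
    · intro τ hτ
      have hfτ : f τ < q τ := hneg τ hτ
      have hτ0 : 0 ≤ τ := hs₀mem.1.trans hτ.1.le
      have hfτ0 : f τ ≤ 0 := (hfτ.le).trans (hqneg τ hτ0)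
      have habs : |f τ| = -f τ := abs_of_nonpos hfτ0
      have hp := hpt τ ⟨hτ0, hτ.2.trans hs.2⟩
      rw [habs] at hp
      have : -c₀ ≤ ℓ τ + (-K) * f τ := by nlinarith
      nlinarith [Real.exp_pos (-K*τ)]
  -- compute the lower bound integral
  have hKne : (-K) ≠ 0 := by linarith
  have hint1 : (∫ τ in s₀..s, -c₀ * Real.exp (-K*τ))
      = -c₀ * ((Real.exp (-K*s) - Real.exp (-K*s₀)) / (-K)) := by
    rw [intervalIntegral.integral_const_mul, expInt _ _ _ hKne]
  -- assemble
  have hlow : Real.exp (-K*s) * f s - Real.exp (-K*s₀) * f s₀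
      ≥ -c₀ * ((Real.exp (-K*s) - Real.exp (-K*s₀)) / (-K)) := by
    rw [hparts, ← hint1]; exact hmono
  -- e^{-Ks₀} q s₀ = u - c₀ s₀
  have hid : ∀ r : ℝ, Real.exp (-K*r) * q r = u - c₀*r := by
    intro r
    rw [hq]
    rw [show Real.exp (-K*r) * (Real.exp (K*r) * (u - c₀*r))
      = (Real.exp (-K*r) * Real.exp (K*r)) * (u - c₀*r) by ring, ← Real.exp_add]
    norm_num
  have hq₀' : u - c₀ * s₀ ≤ Real.exp (-K*s₀) * f s₀ := by
    rw [← hid s₀]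
    exact mul_le_mul_of_nonneg_left hq₀ (Real.exp_pos _).le
  -- exponential estimates
  have hexp1 : Real.exp (-K*s₀) - Real.exp (-K*s) ≤ K * (s - s₀) := by
    have h1 : Real.exp (-K*s₀) * Real.exp (-(K*(s - s₀))) = Real.exp (-K*s) := by
      rw [← Real.exp_add]; ring_nf
    have h2 : 1 - K*(s-s₀) ≤ Real.exp (-(K*(s-s₀))) := by
      have := Real.add_one_le_exp (-(K*(s-s₀))); linarith
    have h3 : Real.exp (-K*s₀) ≤ 1 := by
      rw [Real.exp_le_one_iff]
      nlinarith [hs₀mem.1]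
    nlinarith [Real.exp_pos (-K*s₀), mul_nonneg hK.le (sub_nonneg.mpr hs₀lt.le)]
  -- conclude the contradiction
  have hfinal : u - c₀ * s ≤ Real.exp (-K*s) * f s := by
    have hdiv : -c₀ * ((Real.exp (-K*s) - Real.exp (-K*s₀)) / (-K))
        = (c₀ / K) * (Real.exp (-K*s) - Real.exp (-K*s₀)) := by
      field_simp
    have hKpos := hK
    have h5 : (c₀/K) * (Real.exp (-K*s) - Real.exp (-K*s₀)) ≥ -(c₀ * (s - s₀)) := by
      have hck : 0 ≤ c₀ / K := div_nonneg hc hK.le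
      have := mul_le_mul_of_nonneg_left hexp1 hck
      have hck2 : c₀ / K * (K * (s - s₀)) = c₀ * (s - s₀) := by field_simp
      nlinarith
    nlinarith [hlow, hq₀', hdiv]
  have hlast : Real.exp (-K*s) * f s < u - c₀ * s := by
    rw [← hid s]
    exact mul_lt_mul_of_pos_left hcon (Real.exp_pos _)
  linarith

set_option maxHeartbeats 1000000 in
/-- lower bound for the fundamental solution along a curve with
initial datum `u ≤ 0`:
`u_ξ(t) ≥ e^{Kt} u + e^{-Kt} ∫_0^t θ₀(|ξ'|) - c₀ t e^{Kt}`. -/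
theorem stmt7 (n : ℕ) (K c₀ : ℝ) (hK : 0 < K) (hc₀ : 0 < c₀) (t : ℝ) (ht : 0 < t)
    (L : EuclideanSpace ℝ (Fin n) → ℝ → EuclideanSpace ℝ (Fin n) → ℝ)
    (L₀ : EuclideanSpace ℝ (Fin n) → EuclideanSpace ℝ (Fin n) → ℝ)
    (θ₀ : ℝ → ℝ) (hθ₀_nonneg : ∀ r, 0 ≤ θ₀ r) (hθ₀_mono : Monotone θ₀)
    (hθ₀_zero : θ₀ 0 = 0)
    (hL : ∀ x u v, L x u v ≥ L₀ x v - K * |u|)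
    (hL₀ : ∀ x v, L₀ x v ≥ θ₀ ‖v‖ - c₀)
    (ξ : ℝ → EuclideanSpace ℝ (Fin n)) (ξ' : ℝ → EuclideanSpace ℝ (Fin n))
    (hξ : ∀ s ∈ Set.Icc 0 t, ξ s = ξ 0 + ∫ τ in (0:ℝ)..s, ξ' τ)
    (uξ : ℝ → ℝ) (u : ℝ) (hu0 : uξ 0 = u) (hu_nonpos : u ≤ 0)
    (hLint : IntervalIntegrable (fun s => L (ξ s) (uξ s) (ξ' s)) volume 0 t)
    (huξ : ∀ s ∈ Set.Icc 0 t, uξ s = u + ∫ τ in (0:ℝ)..s, L (ξ τ) (uξ τ) (ξ' τ))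
    (hθint : IntervalIntegrable (fun s => θ₀ ‖ξ' s‖) volume 0 t) :
    uξ t ≥ Real.exp (K * t) * u + Real.exp (-K * t) * (∫ s in (0:ℝ)..t, θ₀ ‖ξ' s‖)
      - c₀ * t * Real.exp (K * t) := by
  set ℓ : ℝ → ℝ := fun τ => L (ξ τ) (uξ τ) (ξ' τ) with hℓdef
  set θ : ℝ → ℝ := fun τ => θ₀ ‖ξ' τ‖ with hθdef
  have hf : ∀ s ∈ Set.Icc (0:ℝ) t, uξ s = uξ 0 + ∫ σ in (0:ℝ)..s, ℓ σ := by
    intro s hs; rw [hu0]; exact huξ s hs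
  have hpt0 : ∀ τ, θ τ - c₀ - K * |uξ τ| ≤ ℓ τ := by
    intro τ
    have h1 := hL (ξ τ) (uξ τ) (ξ' τ)
    have h2 := hL₀ (ξ τ) (ξ' τ)
    simp only [hℓdef, hθdef]
    linarith
  -- Step 1: lower barrier
  have h1 := step1 K c₀ t u hK hc₀.le ht.le hu_nonpos ℓ uξ hLint hf hu0
    (fun τ _ => le_trans (by linarith [hθ₀_nonneg ‖ξ' τ‖]) (hpt0 τ))
  -- continuity of uξ
  have hfc : ContinuousOn uξ (Set.Icc 0 t) := by
    have hprim := intervalIntegral.continuousOn_primitive_interval' hLint Set.left_mem_uIcc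
    rw [Set.uIcc_of_le ht.le] at hprim
    exact (continuousOn_const.add hprim).congr (fun x hx => hf x hx)
  -- parts identity with c = K on [0,t]
  have hparts := parts K 0 t ht.le ℓ uξ hLint hf
  -- pointwise bound and integral comparison
  have hexpc : Continuous fun τ : ℝ => Real.exp (K*τ) :=
    Real.continuous_exp.comp (continuous_const.mul continuous_id)
  have hexpc2 : Continuous fun τ : ℝ => Real.exp (2*K*τ) :=
    Real.continuous_exp.comp (continuous_const.mul continuous_id)
  have hint_lhs : IntervalIntegrable (fun τ => Real.exp (K*τ) * (θ τ - c₀)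
      + 2*K*Real.exp (2*K*τ)*(u - c₀*τ)) volume 0 t := by
    apply IntervalIntegrable.add
    · exact (hθint.sub (intervalIntegrable_const)).continuousOn_mul hexpc.continuousOn
    · exact Continuous.intervalIntegrable
        (((continuous_const.mul hexpc2)).mul
          (continuous_const.sub (continuous_const.mul continuous_id))) _ _
  have hint_rhs : IntervalIntegrable (fun τ => Real.exp (K*τ) * (ℓ τ + K * uξ τ)) volume 0 t := by
    apply IntervalIntegrable.continuousOn_mul
    · apply hLint.add
      apply ContinuousOn.intervalIntegrable
      rw [Set.uIcc_of_le ht.le]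
      exact continuousOn_const.mul hfc
    · exact hexpc.continuousOn
  have hmono : (∫ τ in (0:ℝ)..t, (Real.exp (K*τ) * (θ τ - c₀)
        + 2*K*Real.exp (2*K*τ)*(u - c₀*τ)))
      ≤ ∫ τ in (0:ℝ)..t, Real.exp (K*τ) * (ℓ τ + K * uξ τ) := by
    rw [intervalIntegral.integral_of_le ht.le, intervalIntegral.integral_of_le ht.le]
    apply setIntegral_mono_on hint_lhs.1 hint_rhs.1 measurableSet_Ioc
    intro τ hτ
    have hτI : τ ∈ Set.Icc (0:ℝ) t := ⟨hτ.1.le, hτ.2⟩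
    have hq := h1 τ hτI
    have hqneg : Real.exp (K*τ) * (u - c₀*τ) ≤ 0 := by
      apply mul_nonpos_of_nonneg_of_nonpos (Real.exp_pos _).le
      nlinarith [mul_nonneg hc₀.le hτ.1.le]
    have habs : |uξ τ| ≤ uξ τ - 2 * (Real.exp (K*τ) * (u - c₀*τ)) := by
      rcases abs_cases (uξ τ) with ⟨h, h'⟩ | ⟨h, h'⟩ <;> rw [h] <;> linarith
    have hp := hpt0 τ
    have hKabs : K * |uξ τ| ≤ K * (uξ τ - 2 * (Real.exp (K*τ) * (u - c₀*τ))) :=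
      mul_le_mul_of_nonneg_left habs hK.le
    have hcore : θ τ - c₀ + 2*K*(Real.exp (K*τ) * (u - c₀*τ)) ≤ ℓ τ + K * uξ τ := by
      nlinarith
    have hee : Real.exp (K*τ) * Real.exp (K*τ) = Real.exp (2*K*τ) := by
      rw [← Real.exp_add]; ring_nf
    have hmm := mul_le_mul_of_nonneg_left hcore (Real.exp_pos (K*τ)).le
    calc Real.exp (K*τ) * (θ τ - c₀) + 2*K*Real.exp (2*K*τ)*(u - c₀*τ)
        = Real.exp (K*τ) * (θ τ - c₀ + 2*K*(Real.exp (K*τ) * (u - c₀*τ))) := by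
          rw [← hee]; ring
      _ ≤ Real.exp (K*τ) * (ℓ τ + K * uξ τ) := hmm
  -- named integrals
  set E : ℝ := Real.exp (K*t) with hE
  set E2 : ℝ := Real.exp (2*K*t) with hE2def
  set Θ : ℝ := ∫ τ in (0:ℝ)..t, θ τ with hΘ
  set Θ' : ℝ := ∫ τ in (0:ℝ)..t, Real.exp (K*τ) * θ τ with hΘ'
  set X : ℝ := ∫ τ in (0:ℝ)..t, Real.exp (K*τ) * c₀ with hX
  set Y : ℝ := ∫ τ in (0:ℝ)..t, Real.exp (2*K*τ) with hY
  set Z : ℝ := ∫ τ in (0:ℝ)..t, τ * Real.exp (2*K*τ) with hZ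
  have int1a : IntervalIntegrable (fun τ => Real.exp (K*τ) * θ τ) volume 0 t :=
    hθint.continuousOn_mul hexpc.continuousOn
  have int1b : IntervalIntegrable (fun τ => Real.exp (K*τ) * c₀) volume 0 t :=
    (hexpc.mul continuous_const).intervalIntegrable _ _
  have int2a : IntervalIntegrable (fun τ => (2*K*u) * Real.exp (2*K*τ)) volume 0 t :=
    (continuous_const.mul hexpc2).intervalIntegrable _ _
  have int2b : IntervalIntegrable (fun τ => (2*K*c₀) * (τ * Real.exp (2*K*τ))) volume 0 t :=
    (continuous_const.mul (continuous_id.mul hexpc2)).intervalIntegrable _ _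
  -- value of the comparison integral
  have hval : (∫ τ in (0:ℝ)..t, (Real.exp (K*τ) * (θ τ - c₀)
        + 2*K*Real.exp (2*K*τ)*(u - c₀*τ)))
      = (Θ' - X) + (2*K*u*Y - 2*K*c₀*Z) := by
    have hfe : (fun τ => Real.exp (K*τ) * (θ τ - c₀) + 2*K*Real.exp (2*K*τ)*(u - c₀*τ))
        = fun τ => (Real.exp (K*τ) * θ τ - Real.exp (K*τ) * c₀)
            + ((2*K*u) * Real.exp (2*K*τ) - (2*K*c₀) * (τ * Real.exp (2*K*τ))) := by
      funext τ; ring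
    rw [hfe, intervalIntegral.integral_add ((int1a.sub int1b)) ((int2a.sub int2b)),
      intervalIntegral.integral_sub int1a int1b, intervalIntegral.integral_sub int2a int2b,
      intervalIntegral.integral_const_mul, intervalIntegral.integral_const_mul]
  -- main chain
  have hchain : u + ((Θ' - X) + (2*K*u*Y - 2*K*c₀*Z)) ≤ E * uξ t := by
    have h0 : Real.exp (K*0) * uξ 0 = u := by
      rw [hu0]; norm_num
    rw [← hval]
    have := hmono.trans (le_of_eq hparts.symm)
    linarith [this]
  -- integral identities
  have hθlow : Θ ≤ Θ' := by
    rw [hΘ, hΘ', intervalIntegral.integral_of_le ht.le, intervalIntegral.integral_of_le ht.le]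
    apply setIntegral_mono_on hθint.1 int1a.1 measurableSet_Ioc
    intro τ hτ
    have h1e : (1:ℝ) ≤ Real.exp (K*τ) := Real.one_le_exp (mul_nonneg hK.le hτ.1.le)
    exact le_mul_of_one_le_left (hθ₀_nonneg _) h1e
  have hKexp : K * (∫ τ in (0:ℝ)..t, Real.exp (K*τ)) = E - 1 := by
    have h := expInt' K 0 t
    rw [intervalIntegral.integral_const_mul] at h
    rw [h]; norm_num; exact hE.symm
  have e3 : X * K = c₀ * (E - 1) := by
    rw [hX, intervalIntegral.integral_mul_const]
    linear_combination c₀ * hKexp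
  have e1' : 2*K*Y = E2 - 1 := by
    have h := expInt' (2*K) 0 t
    rw [intervalIntegral.integral_const_mul] at h
    rw [hY, h]; norm_num; exact hE2def.symm
  have e1 : 2*K*u*Y = u*E2 - u := by linear_combination u * e1'
  have hZval : Z * (4*K^2) = 2*K*t*E2 - E2 + 1 := by
    have hd : ∀ τ : ℝ, HasDerivAt (fun y => (y/(2*K)) * Real.exp (2*K*y)
        - Real.exp (2*K*y)/(4*K^2)) (τ * Real.exp (2*K*τ)) τ := by
      intro τ
      have he := expDeriv (2*K) τ
      have hlin : HasDerivAt (fun y : ℝ => y/(2*K)) (1/(2*K)) τ := by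
        simpa using (hasDerivAt_id τ).div_const (2*K)
      have h4 := (hlin.mul he).sub (he.div_const (4*K^2))
      refine HasDerivAt.congr_deriv h4 ?_
      have hK0 : K ≠ 0 := hK.ne'
      field_simp
      ring
    have hZint := intervalIntegral.integral_eq_sub_of_hasDerivAt (fun τ _ => hd τ)
      ((continuous_id.mul hexpc2).intervalIntegrable 0 t)
    rw [hZ, hZint]
    have : Real.exp (2*K*(0:ℝ)) = 1 := by norm_num
    rw [this, hE2def]
    field_simp
    ring
  have e2 : (2*K*c₀*Z)*(2*K) = c₀*(2*K*t*E2 - E2 + 1) := by linear_combination c₀ * hZval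
  -- key inequality
  have hEE : E * E = E2 := by
    rw [hE, hE2def, ← Real.exp_add]; ring_nf
  have hG : 2*K*((u + ((Θ' - X) + (2*K*u*Y - 2*K*c₀*Z))) - (E2*u + Θ - c₀*t*E2))
      = 2*K*(Θ' - Θ) + c₀*(E2 - 2*E + 1) := by
    linear_combination (2*K)*e1 - e2 - 2*e3
  have hnum : 0 ≤ 2*K*(Θ' - Θ) + c₀*(E2 - 2*E + 1) := by
    have hq1 : c₀*(E2 - 2*E + 1) = c₀*(E-1)^2 := by linear_combination (-c₀) * hEE
    nlinarith [mul_nonneg hc₀.le (sq_nonneg (E-1)), mul_nonneg hK.le (sub_nonneg.mpr hθlow)]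
  have hfin : E2*u + Θ - c₀*t*E2 ≤ E * uξ t := by
    nlinarith [hG, hnum, hK, hchain]
  -- conclude
  have hEpos : 0 < E := Real.exp_pos _
  have hEinv : Real.exp (-K*t) * E = 1 := by
    rw [hE, ← Real.exp_add]; norm_num
  rw [ge_iff_le, ← mul_le_mul_iff_right₀ hEpos]
  calc E * (Real.exp (K * t) * u + Real.exp (-K * t) * Θ - c₀ * t * Real.exp (K * t))
      = E2*u + Θ - c₀*t*E2 := by
        rw [← hE]
        linear_combination (u - c₀*t) * hEE + Θ * hEinv
    _ ≤ E * uξ t := hfin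
end

section
/- Under the same hypotheses, if instead $u_\xi(0)=u\ge 0$, then $u_\xi(t)\ge e^{-Kt}u + e^{-Kt}\int_0^t\theta_0(|\dot\xi(s)|)\,ds - c_0 t e^{Kt}$. -/
open MeasureTheory

lemma exp_trapezoid {x : ℝ} (hx : 0 ≤ x) : 2 * (Real.exp x - 1) ≤ x * (1 + Real.exp x) := by
  set g : ℝ → ℝ := fun y => y + y * Real.exp y + 2 - 2 * Real.exp y with hg
  have hder : ∀ y : ℝ, HasDerivAt g (1 + (y - 1) * Real.exp y) y := by
    intro y
    have h1 := (((hasDerivAt_id y).add ((hasDerivAt_id y).mul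
      (Real.hasDerivAt_exp y))).add_const 2).sub ((Real.hasDerivAt_exp y).const_mul 2)
    simp only [id] at h1
    exact h1.congr_deriv (by ring)
  have hd_nonneg : ∀ y : ℝ, 0 ≤ y → 0 ≤ 1 + (y - 1) * Real.exp y := by
    intro y hy
    rcases le_or_gt 1 y with h1 | h1
    · have := Real.exp_pos y
      nlinarith
    · have h2 : (1 - y) * Real.exp y ≤ 1 := by
        have h3 : 1 - y ≤ Real.exp (-y) := by
          have := Real.add_one_le_exp (-y); linarith
        calc (1 - y) * Real.exp y ≤ Real.exp (-y) * Real.exp y :=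
              mul_le_mul_of_nonneg_right h3 (Real.exp_pos y).le
          _ = 1 := by rw [← Real.exp_add]; simp
      nlinarith
  have hmono : MonotoneOn g (Set.Ici (0:ℝ)) := by
    apply monotoneOn_of_deriv_nonneg (convex_Ici 0)
    · exact fun y _ => ((hder y).continuousAt).continuousWithinAt
    · intro y hy
      exact (hder y).differentiableAt.differentiableWithinAt
    · intro y hy
      rw [(hder y).deriv]
      rw [interior_Ici] at hy
      exact hd_nonneg y (le_of_lt hy)
  have h0 : g 0 = 0 := by simp [hg]
  have := hmono (Set.self_mem_Ici) hx hx
  rw [h0] at this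
  simp only [hg] at this
  nlinarith

lemma aux_pos (K a b : ℝ) (hK : 0 ≤ K) (hab : a ≤ b) (h : ℝ → ℝ)
    (hcont : ContinuousOn h (Set.Icc a b))
    (hineq : ∀ s ∈ Set.Icc a b, K * (∫ τ in a..s, h τ) ≤ h s) : 0 ≤ h b := by
  set H : ℝ → ℝ := fun s => ∫ τ in a..s, h τ with hH
  have hint : IntervalIntegrable h volume a b := hcont.intervalIntegrable_of_Icc hab
  have hHcont : ContinuousOn H (Set.Icc a b) := by
    have := intervalIntegral.continuousOn_primitive_interval
      (μ := volume) (f := h) (a := a) (b := b) ?_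
    · rwa [Set.uIcc_of_le hab] at this
    · rw [Set.uIcc_of_le hab]
      exact (intervalIntegrable_iff_integrableOn_Icc_of_le hab).mp hint
  have hHderiv : ∀ s ∈ Set.Ioo a b, HasDerivAt H (h s) s := by
    intro s hs
    have hmem : Set.Icc a b ∈ nhds s := Icc_mem_nhds hs.1 hs.2
    have hca : ContinuousAt h s := hcont.continuousAt hmem
    have hmeas : StronglyMeasurableAtFilter h (nhds s) :=
      ContinuousOn.stronglyMeasurableAtFilter isOpen_Ioo
        (hcont.mono Set.Ioo_subset_Icc_self) s hs
    have hsub : IntervalIntegrable h volume a s := by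
      apply hint.mono_set
      rw [Set.uIcc_of_le hs.1.le, Set.uIcc_of_le hab]
      exact Set.Icc_subset_Icc le_rfl hs.2.le
    exact intervalIntegral.integral_hasDerivAt_right hsub hmeas hca
  set G : ℝ → ℝ := fun s => Real.exp (-K * s) * H s with hG
  have hGmono : MonotoneOn G (Set.Icc a b) := by
    apply monotoneOn_of_deriv_nonneg (convex_Icc a b)
    · exact (((Real.continuous_exp.comp (continuous_const.mul continuous_id)).continuousOn).mul
        hHcont)
    · intro s hs
      rw [interior_Icc] at hs
      have he : HasDerivAt (fun s : ℝ => Real.exp (-K * s)) (Real.exp (-K*s) * (-K)) s := by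
        simpa using (((hasDerivAt_id s).const_mul (-K)).exp)
      exact (he.mul (hHderiv s hs)).differentiableAt.differentiableWithinAt
    · intro s hs
      rw [interior_Icc] at hs
      have hd : HasDerivAt G ((-K) * Real.exp (-K*s) * H s + Real.exp (-K*s) * h s) s := by
        have he : HasDerivAt (fun s : ℝ => Real.exp (-K * s)) (Real.exp (-K*s) * (-K)) s := by
          simpa using (((hasDerivAt_id s).const_mul (-K)).exp)
        have := he.mul (hHderiv s hs)
        exact this.congr_deriv (by ring)
      rw [hd.deriv]
      have h1 : K * H s ≤ h s := hineq s (Set.mem_Icc.mpr ⟨hs.1.le, hs.2.le⟩)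
      have h2 : (0:ℝ) < Real.exp (-K * s) := Real.exp_pos _
      nlinarith
  have hGa : G a = 0 := by simp [hG, hH]
  have := hGmono (Set.left_mem_Icc.mpr hab) (Set.right_mem_Icc.mpr hab) hab
  rw [hGa] at this
  have hHb : 0 ≤ H b := by
    have h2 : (0:ℝ) < Real.exp (-K * b) := Real.exp_pos _
    have h3 : 0 ≤ Real.exp (-K * b) * H b := this
    by_contra hcon
    push_neg at hcon
    nlinarith
  calc (0:ℝ) ≤ K * H b := mul_nonneg hK hHb
    _ ≤ h b := hineq b (Set.right_mem_Icc.mpr hab)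

/-- lower bound for the fundamental solution along a curve with
initial datum `u ≥ 0`:
`u_ξ(t) ≥ e^{-Kt} u + e^{-Kt} ∫_0^t θ₀(|ξ'|) - c₀ t e^{Kt}`. -/
theorem stmt8 (n : ℕ) (K c₀ : ℝ) (hK : 0 < K) (hc₀ : 0 < c₀) (t : ℝ) (ht : 0 < t)
    (L : EuclideanSpace ℝ (Fin n) → ℝ → EuclideanSpace ℝ (Fin n) → ℝ)
    (L₀ : EuclideanSpace ℝ (Fin n) → EuclideanSpace ℝ (Fin n) → ℝ)
    (θ₀ : ℝ → ℝ) (hθ₀_nonneg : ∀ r, 0 ≤ θ₀ r) (hθ₀_mono : Monotone θ₀)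
    (hθ₀_zero : θ₀ 0 = 0)
    (hL : ∀ x u v, L x u v ≥ L₀ x v - K * |u|)
    (hL₀ : ∀ x v, L₀ x v ≥ θ₀ ‖v‖ - c₀)
    (ξ : ℝ → EuclideanSpace ℝ (Fin n)) (ξ' : ℝ → EuclideanSpace ℝ (Fin n))
    (hξ : ∀ s ∈ Set.Icc 0 t, ξ s = ξ 0 + ∫ τ in (0:ℝ)..s, ξ' τ)
    (uξ : ℝ → ℝ) (u : ℝ) (hu0 : uξ 0 = u) (hu_nonneg : 0 ≤ u)
    (hLint : IntervalIntegrable (fun s => L (ξ s) (uξ s) (ξ' s)) volume 0 t)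
    (huξ : ∀ s ∈ Set.Icc 0 t, uξ s = u + ∫ τ in (0:ℝ)..s, L (ξ τ) (uξ τ) (ξ' τ))
    (hθint : IntervalIntegrable (fun s => θ₀ ‖ξ' s‖) volume 0 t) :
    uξ t ≥ Real.exp (-K * t) * u + Real.exp (-K * t) * (∫ s in (0:ℝ)..t, θ₀ ‖ξ' s‖)
      - c₀ * t * Real.exp (K * t) := by
  have ht' : (0:ℝ) ≤ t := ht.le
  set f : ℝ → ℝ := fun τ => L (ξ τ) (uξ τ) (ξ' τ) with hfdef
  set θ : ℝ → ℝ := fun s => θ₀ ‖ξ' s‖ with hθdef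
  -- sub-interval integrability helper
  have hsubint : ∀ (g : ℝ → ℝ), IntervalIntegrable g volume 0 t → ∀ a b,
      a ∈ Set.Icc 0 t → b ∈ Set.Icc 0 t → IntervalIntegrable g volume a b := by
    intro g hg a b ha hb
    apply hg.mono_set
    apply Set.uIcc_subset_uIcc <;> rw [Set.uIcc_of_le ht']
    exacts [ha, hb]
  -- continuity of uξ
  have hwcont : ContinuousOn uξ (Set.Icc 0 t) := by
    have hFc : ContinuousOn (fun s => ∫ τ in (0:ℝ)..s, f τ) (Set.Icc 0 t) := by
      have h1 := intervalIntegral.continuousOn_primitive_interval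
        (μ := volume) (f := f) (a := 0) (b := t) ?_
      · rwa [Set.uIcc_of_le ht'] at h1
      · rw [Set.uIcc_of_le ht']
        exact (intervalIntegrable_iff_integrableOn_Icc_of_le ht').mp hLint
    exact (continuousOn_const.add hFc).congr huξ
  -- increments
  have hwdiff : ∀ a b, a ∈ Set.Icc 0 t → b ∈ Set.Icc 0 t →
      uξ b - uξ a = ∫ τ in a..b, f τ := by
    intro a b ha hb
    have h1 := intervalIntegral.integral_interval_sub_left
      (hsubint f hLint 0 b ⟨le_rfl, ht'⟩ hb) (hsubint f hLint 0 a ⟨le_rfl, ht'⟩ ha)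
    rw [huξ a ha, huξ b hb]
    rw [← h1]; ring
  -- STEP 1: a priori lower bound (first crossing argument)
  have claim : ∀ s ∈ Set.Icc 0 t, -(c₀/K) * (Real.exp (K*s) - 1) ≤ uξ s := by
    by_contra hcon
    push_neg at hcon
    obtain ⟨s₀, hs₀, hws₀⟩ := hcon
    set φ : ℝ → ℝ := fun s => (c₀/K) * (Real.exp (K*s) - 1) with hφdef
    set h : ℝ → ℝ := fun s => uξ s + φ s with hhdef
    have hφc : Continuous φ := by
      apply Continuous.mul continuous_const
      exact (Real.continuous_exp.comp (continuous_const.mul continuous_id)).sub continuous_const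
    have hφnonneg : ∀ s : ℝ, 0 ≤ s → 0 ≤ φ s := by
      intro s hs
      have h1 : (1:ℝ) ≤ Real.exp (K*s) := Real.one_le_exp (by positivity)
      have h2 : (0:ℝ) ≤ c₀/K := by positivity
      simp only [hφdef]
      nlinarith
    have hhc : ContinuousOn h (Set.Icc 0 t) := hwcont.add hφc.continuousOn
    have hh0 : 0 ≤ h 0 := by
      simp only [hhdef, hφdef, hu0]
      simp [Real.exp_zero]
      linarith
    have hhs₀ : h s₀ < 0 := by
      simp only [hhdef, hφdef]
      linarith
    set S : Set ℝ := Set.Icc 0 s₀ ∩ h ⁻¹' (Set.Ici 0) with hSdef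
    have hS0 : (0:ℝ) ∈ S := ⟨⟨le_rfl, hs₀.1⟩, hh0⟩
    have hSbdd : BddAbove S := ⟨s₀, fun x hx => hx.1.2⟩
    have hSclosed : IsClosed S := by
      apply ContinuousOn.preimage_isClosed_of_isClosed
        (hhc.mono (Set.Icc_subset_Icc le_rfl hs₀.2)) isClosed_Icc isClosed_Ici
    set s₁ := sSup S with hs₁def
    have hs₁mem : s₁ ∈ S := hSclosed.csSup_mem ⟨0, hS0⟩ hSbdd
    have hs₁Icc : s₁ ∈ Set.Icc 0 s₀ := hs₁mem.1
    have hs₁h : 0 ≤ h s₁ := hs₁mem.2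
    have hs₁lt : s₁ < s₀ := by
      rcases lt_or_eq_of_le hs₁Icc.2 with h1 | h1
      · exact h1
      · exfalso; rw [h1] at hs₁h; linarith
    have hs₁0 : 0 ≤ s₁ := hs₁Icc.1
    have hs₀t : s₀ ≤ t := hs₀.2
    have hneg : ∀ s, s₁ < s → s ≤ s₀ → h s < 0 := by
      intro s hs hs'
      by_contra hcon2
      push_neg at hcon2
      have hmem : s ∈ S := ⟨⟨le_trans hs₁0 hs.le, hs'⟩, hcon2⟩
      have := le_csSup hSbdd hmem
      linarith
    -- key integral inequality on [s₁, s₀]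
    have hkey : ∀ s ∈ Set.Icc s₁ s₀, K * (∫ τ in s₁..s, h τ) ≤ h s := by
      intro s hs
      have hsIcc : s ∈ Set.Icc 0 t := ⟨le_trans hs₁0 hs.1, le_trans hs.2 hs₀t⟩
      have hs₁Icct : s₁ ∈ Set.Icc 0 t := ⟨hs₁0, le_trans hs₁Icc.2 hs₀t⟩
      have hws : uξ s - uξ s₁ = ∫ τ in s₁..s, f τ := hwdiff s₁ s hs₁Icct hsIcc
      have hfiK : IntervalIntegrable f volume s₁ s := hsubint f hLint s₁ s hs₁Icct hsIcc
      have hwcont' : ContinuousOn uξ (Set.Icc s₁ s) :=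
        hwcont.mono (Set.Icc_subset_Icc hs₁Icct.1 hsIcc.2)
      have hwiK : IntervalIntegrable uξ volume s₁ s :=
        hwcont'.intervalIntegrable_of_Icc hs.1
      have hgiK : IntervalIntegrable (fun τ => K * uξ τ - c₀) volume s₁ s := by
        exact (hwiK.const_mul K).sub (intervalIntegrable_const)
      have hmono : ∫ τ in s₁..s, (K * uξ τ - c₀) ≤ ∫ τ in s₁..s, f τ := by
        apply intervalIntegral.integral_mono_ae_restrict hs.1 hgiK hfiK
        have heq : volume.restrict (Set.Icc s₁ s) = volume.restrict (Set.Ioc s₁ s) :=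
          Measure.restrict_congr_set Ioc_ae_eq_Icc.symm
        rw [heq]
        filter_upwards [ae_restrict_mem measurableSet_Ioc] with τ hτ
        have hhτ : h τ < 0 := hneg τ hτ.1 (le_trans hτ.2 hs.2)
        have hτ0 : 0 ≤ τ := le_trans hs₁0 hτ.1.le
        have hφτ : 0 ≤ φ τ := hφnonneg τ hτ0
        have hwτ : uξ τ < 0 := by
          have : uξ τ + φ τ < 0 := hhτ
          linarith
        have h1 : L₀ (ξ τ) (ξ' τ) - K * |uξ τ| ≤ f τ := hL (ξ τ) (uξ τ) (ξ' τ)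
        have h2 : θ₀ ‖ξ' τ‖ - c₀ ≤ L₀ (ξ τ) (ξ' τ) := hL₀ (ξ τ) (ξ' τ)
        have habs : |uξ τ| = -uξ τ := abs_of_neg hwτ
        have hθτ : 0 ≤ θ₀ ‖ξ' τ‖ := hθ₀_nonneg _
        rw [habs] at h1
        show K * uξ τ - c₀ ≤ f τ
        linarith
      -- FTC for φ
      have hφFTC : ∫ τ in s₁..s, (c₀ + K * φ τ) = φ s - φ s₁ := by
        apply intervalIntegral.integral_eq_sub_of_hasDerivAt
        · intro τ _
          have h1 : HasDerivAt (fun τ : ℝ => (c₀/K) * (Real.exp (K*τ) - 1))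
              ((c₀/K) * (Real.exp (K*τ) * K)) τ := by
            simpa using ((((hasDerivAt_id τ).const_mul K).exp).sub_const 1).const_mul (c₀/K)
          have h2 : (c₀/K) * (Real.exp (K*τ) * K) = c₀ + K * φ τ := by
            simp only [hφdef]
            field_simp
            ring
          rw [h2] at h1
          exact h1
        · apply ContinuousOn.intervalIntegrable
          exact (continuousOn_const.add (hφc.continuousOn.const_smul K))
      have hφiK : IntervalIntegrable φ volume s₁ s := hφc.intervalIntegrable s₁ s
      -- combine
      have hinth : ∫ τ in s₁..s, h τ = (∫ τ in s₁..s, uξ τ) + ∫ τ in s₁..s, φ τ :=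
        intervalIntegral.integral_add hwiK hφiK
      have hg1 : ∫ τ in s₁..s, (K * uξ τ - c₀) = K * (∫ τ in s₁..s, uξ τ) - (s - s₁) * c₀ := by
        rw [intervalIntegral.integral_sub (hwiK.const_mul K) intervalIntegrable_const,
          intervalIntegral.integral_const_mul, intervalIntegral.integral_const]
        simp
      have hg2 : ∫ τ in s₁..s, (c₀ + K * φ τ) = (s - s₁) * c₀ + K * (∫ τ in s₁..s, φ τ) := by
        rw [intervalIntegral.integral_add intervalIntegrable_const (hφiK.const_mul K),
          intervalIntegral.integral_const_mul, intervalIntegral.integral_const]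
        simp
      have hhs : h s = uξ s + φ s := rfl
      have hhs₁' : h s₁ = uξ s₁ + φ s₁ := rfl
      rw [hg2] at hφFTC
      rw [hg1] at hmono
      rw [hhs, hinth]
      linarith
    have hhc' : ContinuousOn h (Set.Icc s₁ s₀) :=
      hhc.mono (Set.Icc_subset_Icc hs₁0 hs₀t)
    have hfinal := aux_pos K s₁ s₀ hK.le hs₁lt.le h hhc' hkey
    linarith
  -- STEP 2: setup of the Gronwall machinery
  have hEc : Continuous (fun s : ℝ => Real.exp (K*s)) :=
    Real.continuous_exp.comp (continuous_const.mul continuous_id)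
  set ρ : ℝ → ℝ := fun τ => θ τ + c₀ - 2*c₀*Real.exp (K*τ) with hρdef
  have hρint : IntervalIntegrable ρ volume 0 t := by
    exact (hθint.add intervalIntegrable_const).sub
      ((continuous_const.mul hEc).intervalIntegrable 0 t)
  have hwint : IntervalIntegrable uξ volume 0 t := hwcont.intervalIntegrable_of_Icc ht'
  set R : ℝ → ℝ := fun s => ∫ τ in (0:ℝ)..s, uξ τ with hRdef
  set A : ℝ → ℝ := fun s => ∫ τ in (0:ℝ)..s, ρ τ with hAdef
  set Θ : ℝ → ℝ := fun s => ∫ τ in (0:ℝ)..s, θ τ with hΘdef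
  set D : ℝ → ℝ := fun s => uξ s + K * R s - A s with hDdef
  have hprim : ∀ (g : ℝ → ℝ), IntervalIntegrable g volume 0 t →
      ContinuousOn (fun s => ∫ τ in (0:ℝ)..s, g τ) (Set.Icc 0 t) := by
    intro g hg
    have h1 := intervalIntegral.continuousOn_primitive_interval
      (μ := volume) (f := g) (a := 0) (b := t) ?_
    · rwa [Set.uIcc_of_le ht'] at h1
    · rw [Set.uIcc_of_le ht']
      exact (intervalIntegrable_iff_integrableOn_Icc_of_le ht').mp hg
  have hRcont : ContinuousOn R (Set.Icc 0 t) := hprim uξ hwint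
  have hAcont : ContinuousOn A (Set.Icc 0 t) := hprim ρ hρint
  have hDcont : ContinuousOn D (Set.Icc 0 t) :=
    (hwcont.add (continuousOn_const.mul hRcont)).sub hAcont
  -- pointwise lower bound on f using the claim
  have hpt : ∀ τ ∈ Set.Icc 0 t, ρ τ - K * uξ τ ≤ f τ := by
    intro τ hτ
    have h1 : L₀ (ξ τ) (ξ' τ) - K * |uξ τ| ≤ f τ := hL (ξ τ) (uξ τ) (ξ' τ)
    have h2 : θ τ - c₀ ≤ L₀ (ξ τ) (ξ' τ) := hL₀ (ξ τ) (ξ' τ)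
    have hE1 : (1:ℝ) ≤ Real.exp (K*τ) := Real.one_le_exp (mul_nonneg hK.le hτ.1)
    have hcl := claim τ hτ
    have hKcl : -(c₀ * (Real.exp (K*τ) - 1)) ≤ K * uξ τ := by
      have h3 := mul_le_mul_of_nonneg_left hcl hK.le
      calc -(c₀ * (Real.exp (K*τ) - 1)) = K * (-(c₀/K) * (Real.exp (K*τ) - 1)) := by
            field_simp
        _ ≤ K * uξ τ := h3
    rcases le_or_gt 0 (uξ τ) with hw | hw
    · have habs : |uξ τ| = uξ τ := abs_of_nonneg hw
      rw [habs] at h1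
      show θ τ + c₀ - 2*c₀*Real.exp (K*τ) - K * uξ τ ≤ f τ
      nlinarith [mul_le_mul_of_nonneg_left hE1 hc₀.le]
    · have habs : |uξ τ| = -uξ τ := abs_of_neg hw
      rw [habs] at h1
      show θ τ + c₀ - 2*c₀*Real.exp (K*τ) - K * uξ τ ≤ f τ
      linarith
  -- D is monotone
  have hDmono : ∀ a b, a ∈ Set.Icc 0 t → b ∈ Set.Icc 0 t → a ≤ b → D a ≤ D b := by
    intro a b ha hb hab
    have hfi : IntervalIntegrable f volume a b := hsubint f hLint a b ha hb
    have hwi : IntervalIntegrable uξ volume a b := hsubint uξ hwint a b ha hb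
    have hρi : IntervalIntegrable ρ volume a b := hsubint ρ hρint a b ha hb
    have h1 : uξ b - uξ a = ∫ τ in a..b, f τ := hwdiff a b ha hb
    have h2 : R b - R a = ∫ τ in a..b, uξ τ :=
      intervalIntegral.integral_interval_sub_left
        (hsubint uξ hwint 0 b ⟨le_rfl, ht'⟩ hb) (hsubint uξ hwint 0 a ⟨le_rfl, ht'⟩ ha)
    have h3 : A b - A a = ∫ τ in a..b, ρ τ :=
      intervalIntegral.integral_interval_sub_left
        (hsubint ρ hρint 0 b ⟨le_rfl, ht'⟩ hb) (hsubint ρ hρint 0 a ⟨le_rfl, ht'⟩ ha)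
    have h4 : 0 ≤ ∫ τ in a..b, (f τ + K * uξ τ - ρ τ) := by
      apply intervalIntegral.integral_nonneg hab
      intro τ hτ
      have hτ' : τ ∈ Set.Icc 0 t := ⟨le_trans ha.1 hτ.1, le_trans hτ.2 hb.2⟩
      have := hpt τ hτ'
      linarith
    rw [intervalIntegral.integral_sub (hfi.add (hwi.const_mul K)) hρi,
      intervalIntegral.integral_add hfi (hwi.const_mul K),
      intervalIntegral.integral_const_mul] at h4
    have h2' : K * (R b - R a) = K * ∫ τ in a..b, uξ τ := by rw [h2]
    show uξ a + K * R a - A a ≤ uξ b + K * R b - A b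
    linarith [h1, h2', h3, h4]
  -- FTC identity
  have hR0 : R 0 = 0 := intervalIntegral.integral_same
  have hcontI : ContinuousOn (fun s => Real.exp (K*s) * (K * R s + uξ s)) (Set.Icc 0 t) :=
    hEc.continuousOn.mul ((continuousOn_const.mul hRcont).add hwcont)
  have hFTC : ∫ s in (0:ℝ)..t, Real.exp (K*s) * (K * R s + uξ s)
      = Real.exp (K*t) * R t := by
    have h1 : ∫ s in (0:ℝ)..t, Real.exp (K*s) * (K * R s + uξ s)
        = Real.exp (K*t) * R t - Real.exp (K*0) * R 0 := by
      apply intervalIntegral.integral_eq_sub_of_hasDeriv_right_of_le ht'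
      · exact hEc.continuousOn.mul hRcont
      · intro s hs
        have hmem : Set.Icc 0 t ∈ nhds s := Icc_mem_nhds hs.1 hs.2
        have hca : ContinuousAt uξ s := hwcont.continuousAt hmem
        have hmeas : StronglyMeasurableAtFilter uξ (nhds s) :=
          ContinuousOn.stronglyMeasurableAtFilter isOpen_Ioo
            (hwcont.mono Set.Ioo_subset_Icc_self) s hs
        have hsub : IntervalIntegrable uξ volume 0 s :=
          hsubint uξ hwint 0 s ⟨le_rfl, ht'⟩ ⟨hs.1.le, hs.2.le⟩
        have hR' : HasDerivAt R (uξ s) s :=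
          intervalIntegral.integral_hasDerivAt_right hsub hmeas hca
        have he : HasDerivAt (fun s : ℝ => Real.exp (K * s)) (Real.exp (K*s) * K) s := by
          simpa using (((hasDerivAt_id s).const_mul K).exp)
        have hd := he.mul hR'
        have heq : Real.exp (K*s) * K * R s + Real.exp (K*s) * uξ s
            = Real.exp (K*s) * (K * R s + uξ s) := by ring
        rw [heq] at hd
        exact hd.hasDerivWithinAt
      · exact hcontI.intervalIntegrable_of_Icc ht'
    rw [hR0] at h1
    rw [h1]
    ring
  -- A versus Θ
  have hAsplit : ∀ s ∈ Set.Icc 0 t, A s = Θ s + ∫ τ in (0:ℝ)..s, (c₀ - 2*c₀*Real.exp (K*τ)) := by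
    intro s hs
    have hθi : IntervalIntegrable θ volume 0 s := hsubint θ hθint 0 s ⟨le_rfl, ht'⟩ hs
    have hci : IntervalIntegrable (fun τ : ℝ => c₀ - 2*c₀*Real.exp (K*τ)) volume 0 s :=
      (intervalIntegrable_const.sub ((continuous_const.mul hEc).intervalIntegrable 0 s))
    have h1 : A s = ∫ τ in (0:ℝ)..s, (θ τ + (c₀ - 2*c₀*Real.exp (K*τ))) := by
      apply intervalIntegral.integral_congr
      intro τ _
      show θ τ + c₀ - 2*c₀*Real.exp (K*τ) = _
      ring
    rw [h1, intervalIntegral.integral_add hθi hci]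
  have hAΘ : ∀ s ∈ Set.Icc 0 t, A s ≤ Θ s := by
    intro s hs
    have h1 := hAsplit s hs
    have hci : IntervalIntegrable (fun τ : ℝ => c₀ - 2*c₀*Real.exp (K*τ)) volume 0 s :=
      (intervalIntegrable_const.sub ((continuous_const.mul hEc).intervalIntegrable 0 s))
    have h2 : ∫ τ in (0:ℝ)..s, (c₀ - 2*c₀*Real.exp (K*τ)) ≤ ∫ τ in (0:ℝ)..s, (0:ℝ) := by
      apply intervalIntegral.integral_mono_on hs.1 hci intervalIntegrable_const
      intro τ hτ
      have hE1 : (1:ℝ) ≤ Real.exp (K*τ) := Real.one_le_exp (mul_nonneg hK.le hτ.1)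
      nlinarith [mul_le_mul_of_nonneg_left hE1 hc₀.le]
    simp only [intervalIntegral.integral_zero] at h2
    linarith
  have hΘmono : ∀ s ∈ Set.Icc 0 t, Θ s ≤ Θ t := by
    intro s hs
    have h2 : Θ t - Θ s = ∫ τ in s..t, θ τ :=
      intervalIntegral.integral_interval_sub_left hθint (hsubint θ hθint 0 s ⟨le_rfl, ht'⟩ hs)
    have h3 : 0 ≤ ∫ τ in s..t, θ τ :=
      intervalIntegral.integral_nonneg hs.2 (fun τ _ => hθ₀_nonneg _)
    linarith
  -- the main bound on the FTC integral
  have hfe : ∫ s in (0:ℝ)..t, Real.exp (K*s) = (Real.exp (K*t) - 1)/K := by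
    have hFT := intervalIntegral.integral_eq_sub_of_hasDerivAt
      (f := fun s => Real.exp (K*s)/K) (f' := fun s => Real.exp (K*s)) ?_
      (hEc.intervalIntegrable 0 t)
    · rw [hFT]
      show Real.exp (K*t)/K - Real.exp (K*0)/K = _
      rw [mul_zero, Real.exp_zero]
      ring
    · intro s _
      have h1 : HasDerivAt (fun s : ℝ => Real.exp (K*s)/K) ((Real.exp (K*s) * K)/K) s := by
        simpa using (((hasDerivAt_id s).const_mul K).exp).div_const K
      have h2 : (Real.exp (K*s) * K)/K = Real.exp (K*s) := by field_simp
      rw [h2] at h1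
      simpa using h1
  have hbound : ∫ s in (0:ℝ)..t, Real.exp (K*s) * (K * R s + uξ s)
      ≤ (D t + Θ t) * ((Real.exp (K*t) - 1)/K) := by
    calc ∫ s in (0:ℝ)..t, Real.exp (K*s) * (K * R s + uξ s)
        ≤ ∫ s in (0:ℝ)..t, Real.exp (K*s) * (D t + Θ t) := by
          apply intervalIntegral.integral_mono_on ht' (hcontI.intervalIntegrable_of_Icc ht')
            ((hEc.mul continuous_const).intervalIntegrable 0 t)
          intro s hs
          have h1 := hDmono s t hs ⟨ht', le_rfl⟩ hs.2
          have h2 := hAΘ s hs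
          have h3 := hΘmono s hs
          have h4 : K * R s + uξ s = D s + A s := by
            show K * R s + uξ s = (uξ s + K * R s - A s) + A s
            ring
          rw [h4]
          apply mul_le_mul_of_nonneg_left _ (Real.exp_pos _).le
          linarith
      _ = (D t + Θ t) * ((Real.exp (K*t) - 1)/K) := by
          rw [intervalIntegral.integral_mul_const, hfe]
          ring
  -- value of A t
  have hAt : A t = Θ t + (c₀ * t - (2*c₀/K) * (Real.exp (K*t) - 1)) := by
    have h1 := hAsplit t ⟨ht', le_rfl⟩
    have h2 : ∫ τ in (0:ℝ)..t, (c₀ - 2*c₀*Real.exp (K*τ))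
        = c₀*t - (2*c₀/K)*(Real.exp (K*t) - 1) := by
      have hFT := intervalIntegral.integral_eq_sub_of_hasDerivAt
        (f := fun τ => c₀*τ - (2*c₀/K)*Real.exp (K*τ))
        (f' := fun τ => c₀ - 2*c₀*Real.exp (K*τ)) ?_
        (intervalIntegrable_const.sub ((continuous_const.mul hEc).intervalIntegrable 0 t))
      · rw [hFT]
        show c₀*t - (2*c₀/K)*Real.exp (K*t) - (c₀*0 - (2*c₀/K)*Real.exp (K*0)) = _
        simp only [mul_zero, Real.exp_zero]
        ring
      · intro τ _
        have h3 : HasDerivAt (fun τ : ℝ => c₀*τ - (2*c₀/K)*Real.exp (K*τ))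
            (c₀ - (2*c₀/K)*(Real.exp (K*τ) * K)) τ := by
          have h5 := ((hasDerivAt_id τ).const_mul c₀).fun_sub
            ((((hasDerivAt_id τ).const_mul K).exp).const_mul (2*c₀/K))
          simpa using h5
        have h4 : c₀ - (2*c₀/K)*(Real.exp (K*τ) * K) = c₀ - 2*c₀*Real.exp (K*τ) := by
          field_simp
        rw [h4] at h3
        exact h3
    rw [h1, h2]
  -- final assembly
  have hEm : Real.exp (-K*t) * Real.exp (K*t) = 1 := by
    rw [← Real.exp_add]
    have : -K*t + K*t = 0 := by ring
    rw [this, Real.exp_zero]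
  have h6 : uξ t = D t + A t - K * R t := by
    show uξ t = (uξ t + K * R t - A t) + A t - K * R t
    ring
  have h7 : Real.exp (K*t) * R t ≤ (D t + Θ t) * ((Real.exp (K*t) - 1)/K) := by
    rw [← hFTC]; exact hbound
  have h8 : K * R t ≤ Real.exp (-K*t) * ((D t + Θ t) * (Real.exp (K*t) - 1)) := by
    have h9 := mul_le_mul_of_nonneg_left h7
      (mul_nonneg hK.le (Real.exp_pos (-K*t)).le)
    have h10 : K * Real.exp (-K*t) * (Real.exp (K*t) * R t) = K * R t := by
      calc K * Real.exp (-K*t) * (Real.exp (K*t) * R t)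
          = (Real.exp (-K*t) * Real.exp (K*t)) * (K * R t) := by ring
        _ = K * R t := by rw [hEm]; ring
    have h11 : K * Real.exp (-K*t) * ((D t + Θ t) * ((Real.exp (K*t) - 1)/K))
        = Real.exp (-K*t) * ((D t + Θ t) * (Real.exp (K*t) - 1)) := by
      field_simp
    rw [h10, h11] at h9
    exact h9
  have hA0 : A 0 = 0 := intervalIntegral.integral_same
  have hDt : u ≤ D t := by
    have h12 := hDmono 0 t ⟨le_rfl, ht'⟩ ⟨ht', le_rfl⟩ ht'
    have hD0 : D 0 = u := by
      show uξ 0 + K * R 0 - A 0 = u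
      rw [hu0, hR0, hA0]
      ring
    linarith
  have htrap : (2*c₀/K) * (Real.exp (K*t) - 1) ≤ c₀*t + c₀*t*Real.exp (K*t) := by
    have h9 := exp_trapezoid (x := K*t) (by positivity)
    have h10 : (0:ℝ) ≤ c₀/K := by positivity
    calc (2*c₀/K) * (Real.exp (K*t) - 1) = (c₀/K) * (2*(Real.exp (K*t) - 1)) := by ring
      _ ≤ (c₀/K) * ((K*t) * (1 + Real.exp (K*t))) := mul_le_mul_of_nonneg_left h9 h10
      _ = c₀*t + c₀*t*Real.exp (K*t) := by field_simp
  have h12 : D t + Θ t - Real.exp (-K*t) * ((D t + Θ t) * (Real.exp (K*t) - 1))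
      = Real.exp (-K*t) * (D t + Θ t) := by
    calc D t + Θ t - Real.exp (-K*t) * ((D t + Θ t) * (Real.exp (K*t) - 1))
        = (D t + Θ t) * (1 + Real.exp (-K*t) - Real.exp (-K*t)*Real.exp (K*t)) := by ring
      _ = Real.exp (-K*t) * (D t + Θ t) := by rw [hEm]; ring
  have hfin1 : Real.exp (-K*t) * (u + Θ t) ≤ Real.exp (-K*t) * (D t + Θ t) :=
    mul_le_mul_of_nonneg_left (by linarith) (Real.exp_pos _).le
  have hΘt : Θ t = ∫ s in (0:ℝ)..t, θ s := by
    show (∫ τ in (0:ℝ)..t, θ τ) = _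
    rfl
  rw [ge_iff_le, ← hΘt]
  nlinarith [h6, hAt, h8, h12, hfin1, htrap]
end
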